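/- For every b with 0 ≤ b < bmax there exists exactly one real r such that r > −1, Dh(b,r) > 0, Dl(b,r) > 0 and F(b,r) = 0; moreover this unique natural rate satisfies r < iss. (Existence, uniqueness and an upper bound for the natural rate of interest implicitly defined by the paper's equation (14).) -/

import Mathlib

/-- High-productivity stationary consumption denominator:
Dh(b,r) = w·zh + (1−β)·(1+r)·b·(1−zh) with w = (ε−1)/ε. -/
noncomputable def Dh (β ε zh : ℝ) (b r : ℝ) : ℝ :=
  ((ε - 1) / ε) * zh + (1 - β) * (1 + r) * b * (1 - zh)

/-- Low-productivity stationary consumption denominator: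
Dl(b,r) = w·zl + (1−β)·(1+r)·b·(1−zl) with w = (ε−1)/ε. -/
noncomputable def Dl (β ε zl : ℝ) (b r : ℝ) : ℝ :=
  ((ε - 1) / ε) * zl + (1 - β) * (1 + r) * b * (1 - zl)

/-- Auxiliary monotonicity fact for a Möbius-type fraction. -/
lemma frac_lt (a d x1 x2 : ℝ) (ha : 0 < a) (h1 : 0 < a + d * x1)
    (h2 : 0 < a + d * x2) (hx : x1 < x2) :
    x1 / (a + d * x1) < x2 / (a + d * x2) := by
  rw [div_lt_div_iff₀ h1 h2]
  nlinarith [mul_pos ha (sub_pos.2 hx)]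

/-- Natural-rate equation residual:
F(b,r) = β·ρ·(1+r)/Dh(b,r) + β·(1−ρ)·(1+r)/Dl(b,r) − ε/(ε−1). -/
noncomputable def F (β ε ρ zh zl : ℝ) (b r : ℝ) : ℝ :=
  β * ρ * (1 + r) / Dh β ε zh b r
    + β * (1 - ρ) * (1 + r) / Dl β ε zl b r
    - ε / (ε - 1)

/-- Existence, uniqueness and an upper bound for the natural rate of interest:
for every debt level 0 ≤ b < bmax there is exactly one r > −1 with positive
denominators solving F(b,r) = 0, and any such r lies strictly below
iss = (1−β)/β. -/
theorem stmt_6 (β ε ρ zh zl : ℝ)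
    (hβ0 : 0 < β) (hβ1 : β < 1) (hε : 1 < ε)
    (hρ0 : 0 < ρ) (hρ1 : ρ < 1)
    (hzl0 : 0 < zl) (hzl1 : zl < 1) (hzh : 1 < zh)
    (hmean : ρ * zh + (1 - ρ) * zl = 1) :
    ∀ b : ℝ, 0 ≤ b → b < ((ε - 1) / ε) * (β / (1 - β)) →
      (∃! r : ℝ, r > -1 ∧ Dh β ε zh b r > 0 ∧ Dl β ε zl b r > 0 ∧
          F β ε ρ zh zl b r = 0) ∧
      (∀ r : ℝ, (r > -1 ∧ Dh β ε zh b r > 0 ∧ Dl β ε zl b r > 0 ∧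
          F β ε ρ zh zl b r = 0) → r < (1 - β) / β) := by
  intro b hb0 hbmax
  have hε0 : (0 : ℝ) < ε := lt_trans one_pos hε
  have hε1 : (0 : ℝ) < ε - 1 := by linarith
  have h1β : (0 : ℝ) < 1 - β := by linarith
  obtain ⟨w, hw⟩ : ∃ w : ℝ, w = (ε - 1) / ε := ⟨_, rfl⟩
  obtain ⟨c, hc⟩ : ∃ c : ℝ, c = (1 - β) * b := ⟨_, rfl⟩
  obtain ⟨iss, hiss⟩ : ∃ i : ℝ, i = (1 - β) / β := ⟨_, rfl⟩
  rw [← hw] at hbmax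
  rw [← hiss]
  have hw0 : 0 < w := by rw [hw]; exact div_pos hε1 hε0
  have hc0 : 0 ≤ c := by rw [hc]; exact mul_nonneg h1β.le hb0
  have hcβw : c < β * w := by
    have h := mul_lt_mul_of_pos_left hbmax h1β
    have heq : (1 - β) * (w * (β / (1 - β))) = β * w := by
      field_simp
    rw [hc]; linarith [heq ▸ h]
  have hiss0 : 0 < iss := by rw [hiss]; exact div_pos h1β hβ0
  have h1iss : 1 + iss = 1 / β := by
    rw [hiss]; field_simp; ring
  -- denominators rewritten
  have hDh' : ∀ r : ℝ, Dh β ε zh b r = w * zh + (c * (1 - zh)) * (1 + r) := by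
    intro r; rw [hw, hc]; unfold Dh; ring
  have hDl' : ∀ r : ℝ, Dl β ε zl b r = w * zl + (c * (1 - zl)) * (1 + r) := by
    intro r; rw [hw, hc]; unfold Dl; ring
  -- the quantity t = c/β
  have ht : c * (1 + iss) < w := by
    rw [h1iss, mul_one_div]
    exact (div_lt_iff₀ hβ0).2 (by linarith)
  have ht0 : 0 ≤ c * (1 + iss) := by
    rw [h1iss]; positivity
  -- A, B : denominators at iss
  obtain ⟨A, hAdef⟩ : ∃ A : ℝ, A = Dh β ε zh b iss := ⟨_, rfl⟩
  obtain ⟨B, hBdef⟩ : ∃ B : ℝ, B = Dl β ε zl b iss := ⟨_, rfl⟩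
  have hAeq : A = w * zh + (c * (1 + iss)) * (1 - zh) := by
    rw [hAdef, hDh' iss]; ring
  have hBeq : B = w * zl + (c * (1 + iss)) * (1 - zl) := by
    rw [hBdef, hDl' iss]; ring
  have hA0 : 0 < A := by
    rw [hAeq]
    nlinarith [mul_pos (sub_pos.2 ht) (sub_pos.2 hzh)]
  have hB0 : 0 < B := by
    rw [hBeq]
    nlinarith [mul_pos hw0 hzl0, mul_nonneg ht0 (by linarith : (0:ℝ) ≤ 1 - zl)]
  have hBA : B < A := by
    rw [hAeq, hBeq]
    nlinarith [mul_pos (sub_pos.2 ht) (by linarith : (0:ℝ) < zh - zl)]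
  have hsum : ρ * A + (1 - ρ) * B = w := by
    rw [hAeq, hBeq]
    linear_combination (w - c * (1 + iss)) * hmean
  -- F at iss is positive
  have e1 : β * ρ * (1 + iss) = ρ := by rw [h1iss]; field_simp
  have e2 : β * (1 - ρ) * (1 + iss) = 1 - ρ := by rw [h1iss]; field_simp
  have e3 : ε / (ε - 1) = 1 / w := by rw [hw, one_div_div]
  have hFiss : 0 < F β ε ρ zh zl b iss := by
    have hF : F β ε ρ zh zl b iss = ρ / A + (1 - ρ) / B - 1 / w := by
      unfold F
      rw [← hAdef, ← hBdef, e1, e2, e3]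
    rw [hF, sub_pos, div_add_div _ _ hA0.ne' hB0.ne',
      div_lt_div_iff₀ hw0 (mul_pos hA0 hB0)]
    have key : (ρ * B + (1 - ρ) * A) * w = A * B + ρ * (1 - ρ) * (A - B) ^ 2 := by
      rw [← hsum]; ring
    have hpos : 0 < ρ * (1 - ρ) * (A - B) ^ 2 :=
      mul_pos (mul_pos hρ0 (by linarith)) (pow_pos (sub_pos.2 hBA) 2)
    linarith [key, hpos]
  -- positivity of denominators on the relevant ranges
  have hDhpos : ∀ r : ℝ, r ≤ iss → 0 < Dh β ε zh b r := by
    intro r hr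
    rw [hDh' r]
    have hd : c * (1 - zh) ≤ 0 :=
      mul_nonpos_of_nonneg_of_nonpos hc0 (by linarith)
    have hAle : A ≤ w * zh + (c * (1 - zh)) * (1 + r) := by
      rw [hAdef, hDh' iss]
      have := mul_le_mul_of_nonpos_left
        (by linarith : (1 : ℝ) + r ≤ 1 + iss) hd
      linarith
    linarith
  have hDlpos : ∀ r : ℝ, -1 ≤ r → 0 < Dl β ε zl b r := by
    intro r hr
    rw [hDl' r]
    linarith [mul_pos hw0 hzl0,
      mul_nonneg (mul_nonneg hc0 (by linarith : (0:ℝ) ≤ 1 - zl))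
        (by linarith : (0:ℝ) ≤ 1 + r)]
  -- strict monotonicity of F
  have hmono : ∀ r1 r2 : ℝ, -1 < r1 → r1 < r2 →
      0 < Dh β ε zh b r1 → 0 < Dh β ε zh b r2 →
      0 < Dl β ε zl b r1 → 0 < Dl β ε zl b r2 →
      F β ε ρ zh zl b r1 < F β ε ρ zh zl b r2 := by
    intro r1 r2 h1 h12 hh1 hh2 hl1 hl2
    rw [hDh' r1] at hh1
    rw [hDh' r2] at hh2
    rw [hDl' r1] at hl1
    rw [hDl' r2] at hl2
    have t1 : β * ρ * (1 + r1) / Dh β ε zh b r1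
        < β * ρ * (1 + r2) / Dh β ε zh b r2 := by
      rw [hDh' r1, hDh' r2, mul_div_assoc, mul_div_assoc]
      exact mul_lt_mul_of_pos_left
        (frac_lt _ _ _ _ (mul_pos hw0 (by linarith)) hh1 hh2 (by linarith))
        (mul_pos hβ0 hρ0)
    have t2 : β * (1 - ρ) * (1 + r1) / Dl β ε zl b r1
        < β * (1 - ρ) * (1 + r2) / Dl β ε zl b r2 := by
      rw [hDl' r1, hDl' r2, mul_div_assoc, mul_div_assoc]
      exact mul_lt_mul_of_pos_left
        (frac_lt _ _ _ _ (mul_pos hw0 hzl0) hl1 hl2 (by linarith))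
        (mul_pos hβ0 (by linarith))
    unfold F
    linarith
  -- F at -1 is negative
  have hFneg : F β ε ρ zh zl b (-1) < 0 := by
    unfold F
    norm_num
    rw [e3]
    positivity
  -- continuity
  have hcDh : Continuous (Dh β ε zh b) := by
    unfold Dh; fun_prop
  have hcDl : Continuous (Dl β ε zl b) := by
    unfold Dl; fun_prop
  have hFcont : ContinuousOn (F β ε ρ zh zl b) (Set.Icc (-1) iss) := by
    unfold F
    apply ContinuousOn.sub _ continuousOn_const
    apply ContinuousOn.add
    · exact ContinuousOn.div (by fun_prop) hcDh.continuousOn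
        (fun r hr => (hDhpos r hr.2).ne')
    · exact ContinuousOn.div (by fun_prop) hcDl.continuousOn
        (fun r hr => (hDlpos r hr.1).ne')
  have hlt : (-1 : ℝ) < iss := by linarith
  have h0mem : (0 : ℝ) ∈ Set.Ioo (F β ε ρ zh zl b (-1)) (F β ε ρ zh zl b iss) :=
    ⟨hFneg, hFiss⟩
  obtain ⟨r, hrI, hFr⟩ := intermediate_value_Ioo hlt.le hFcont h0mem
  have hrDh := hDhpos r hrI.2.le
  have hrDl := hDlpos r hrI.1.le
  constructor
  · refine ⟨r, ⟨hrI.1, hrDh, hrDl, hFr⟩, ?_⟩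
    rintro y ⟨hy1, hyDh, hyDl, hyF⟩
    rcases lt_trichotomy y r with h | h | h
    · exfalso
      have := hmono y r hy1 h hyDh hrDh hyDl hrDl
      rw [hyF, hFr] at this
      exact lt_irrefl 0 this
    · exact h
    · exfalso
      have := hmono r y hrI.1 h hrDh hyDh hrDl hyDl
      rw [hyF, hFr] at this
      exact lt_irrefl 0 this
  · rintro y ⟨hy1, hyDh, hyDl, hyF⟩
    by_contra hcon
    push_neg at hcon
    rcases eq_or_lt_of_le hcon with h | h
    · rw [← h] at hyF
      exact absurd hyF (ne_of_gt hFiss)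
    · have hissDh : 0 < Dh β ε zh b iss := hDhpos iss le_rfl
      have hissDl : 0 < Dl β ε zl b iss := hDlpos iss (by linarith)
      have := hmono iss y (by linarith) h hissDh hyDh hissDl hyDl
      rw [hyF] at this
      linarith
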